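/- arXiv:1603.09330 — 4 statements merged into one kernel-verified Lean document; each statement's English description precedes it below -/
import Mathlib

section
/- Let C, C' be triangulated categories with weight structures w, w', and let F : C ⇄ C' : G be an adjoint pair of exact (triangulated) functors. Assume w is generated by a class P ⊆ Obj C, i.e., C_{w≥0} = (∪_{i>0} P[-i])^⊥. Then the following are equivalent: (i) F is left weight-exact, i.e., F(C_{w≤0}) ⊆ C'_{w'≤0}; (ii) F(P) ⊆ C'_{w'≤0}; (iii) G is right weight-exact, i.e., G(C'_{w'≥0}) ⊆ C_{w≥0}. -/
open CategoryTheory CategoryTheory.Limits CategoryTheory.Pretriangulated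

universe v u

/-- A weight structure on a (pre)triangulated category, in the homological convention. -/
structure WeightStructure (C : Type u) [Category.{v} C] [Preadditive C] [HasZeroObject C]
    [HasShift C ℤ] [∀ n : ℤ, (shiftFunctor C n).Additive] [Pretriangulated C] where
  LE : Set C
  GE : Set C
  retract_LE : ∀ ⦃X Y : C⦄, Y ∈ LE → ∀ (i : X ⟶ Y) (r : Y ⟶ X), i ≫ r = 𝟙 X → X ∈ LE
  retract_GE : ∀ ⦃X Y : C⦄, Y ∈ GE → ∀ (i : X ⟶ Y) (r : Y ⟶ X), i ≫ r = 𝟙 X → X ∈ GE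
  shift_LE : ∀ ⦃X : C⦄, X ∈ LE → X⟦(-1 : ℤ)⟧ ∈ LE
  shift_GE : ∀ ⦃X : C⦄, X ∈ GE → X⟦(1 : ℤ)⟧ ∈ GE
  orth : ∀ ⦃X Y : C⦄, X ∈ LE → Y ∈ GE → ∀ f : X ⟶ Y⟦(1 : ℤ)⟧, f = 0
  decomp : ∀ M : C, ∃ (X Y : C) (f : X ⟶ M) (g : M ⟶ Y) (h : Y ⟶ X⟦(1 : ℤ)⟧),
    (Triangle.mk f g h ∈ distTriang C) ∧ X ∈ LE ∧ Y⟦(-1 : ℤ)⟧ ∈ GE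

variable {C : Type u} [Category.{v} C] [Preadditive C] [HasZeroObject C]
    [HasShift C ℤ] [∀ n : ℤ, (shiftFunctor C n).Additive] [Pretriangulated C]

/-- `C_{w ≤ n} = C_{w ≤ 0}[n]`. -/
def WeightStructure.LEdeg (w : WeightStructure C) (n : ℤ) : Set C := {X | X⟦(-n)⟧ ∈ w.LE}

/-- `C_{w ≥ n} = C_{w ≥ 0}[n]`. -/
def WeightStructure.GEdeg (w : WeightStructure C) (n : ℤ) : Set C := {X | X⟦(-n)⟧ ∈ w.GE}

variable {C' : Type*} [Category C'] [Preadditive C'] [HasZeroObject C']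
    [HasShift C' ℤ] [∀ n : ℤ, (shiftFunctor C' n).Additive] [Pretriangulated C']

namespace WeightStructure

variable (w : WeightStructure C)

lemma mem_LE_of_iso {X Y : C} (e : X ≅ Y) (h : Y ∈ w.LE) : X ∈ w.LE :=
  w.retract_LE h e.hom e.inv e.hom_inv_id

lemma mem_GE_of_iso {X Y : C} (e : X ≅ Y) (h : Y ∈ w.GE) : X ∈ w.GE :=
  w.retract_GE h e.hom e.inv e.hom_inv_id

lemma shift_neg_nat_LE {X : C} (h : X ∈ w.LE) (n : ℕ) : X⟦(-(n : ℤ))⟧ ∈ w.LE := by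
  induction n with
  | zero =>
      simp only [Nat.cast_zero, neg_zero]
      exact w.mem_LE_of_iso ((shiftFunctorZero C ℤ).app X) h
  | succ n ih =>
      have e := (shiftFunctorAdd' C (-(n : ℤ)) (-1) (-((n + 1 : ℕ) : ℤ))
        (by push_cast; ring)).app X
      exact w.mem_LE_of_iso e (w.shift_LE ih)

lemma hom_zero_of_LE_neg_one {X Y : C} (hX : X ∈ w.LE) (hY : Y ∈ w.GE)
    (f : X⟦(-1 : ℤ)⟧ ⟶ Y) : f = 0 := by
  apply (shiftFunctor C (1 : ℤ)).map_injective
  rw [Functor.map_zero]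
  have h0 : (shiftNegShift X (1 : ℤ)).inv ≫ (shiftFunctor C (1 : ℤ)).map f = 0 :=
    w.orth hX hY _
  calc (shiftFunctor C (1 : ℤ)).map f
      = (shiftNegShift X (1 : ℤ)).hom ≫
          ((shiftNegShift X (1 : ℤ)).inv ≫ (shiftFunctor C (1 : ℤ)).map f) := by simp
    _ = 0 := by rw [h0, comp_zero]

lemma hom_zero_of_LE_shift {X Y : C} (hX : X ∈ w.LE) (hY : Y ∈ w.GE)
    (i : ℤ) (hi : 0 < i) (f : X⟦(-i)⟧ ⟶ Y) : f = 0 := by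
  obtain ⟨n, rfl⟩ : ∃ n : ℕ, i = (n : ℤ) + 1 := ⟨(i - 1).toNat, by omega⟩
  have e := (shiftFunctorAdd' C (-(n : ℤ)) (-1) (-((n : ℤ) + 1)) (by ring)).app X
  have h0 : e.inv ≫ f = 0 :=
    w.hom_zero_of_LE_neg_one (w.shift_neg_nat_LE hX n) hY _
  calc f = e.hom ≫ (e.inv ≫ f) := by simp
    _ = 0 := by rw [h0, comp_zero]

lemma mem_LE_iff (M : C) :
    M ∈ w.LE ↔ ∀ Y ∈ w.GE, ∀ f : M ⟶ Y⟦(1 : ℤ)⟧, f = 0 := by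
  constructor
  · exact fun hM Y hY f => w.orth hM hY f
  · intro h
    obtain ⟨X, Y, f, g, δ, hT, hX, hY⟩ := w.decomp M
    have hg : g = 0 := by
      have h1 : g ≫ (shiftNegShift Y (1 : ℤ)).inv = 0 := h _ hY _
      calc g = (g ≫ (shiftNegShift Y (1 : ℤ)).inv) ≫ (shiftNegShift Y (1 : ℤ)).hom := by
            rw [Category.assoc, Iso.inv_hom_id, Category.comp_id]
        _ = 0 := by rw [h1, zero_comp]
    obtain ⟨r, hr⟩ := Triangle.coyoneda_exact₂ _ hT (𝟙 M)
      (show 𝟙 M ≫ (Triangle.mk f g δ).mor₂ = 0 by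
        rw [show (Triangle.mk f g δ).mor₂ = 0 from hg]; exact comp_zero)
    exact w.retract_LE hX r f hr.symm

end WeightStructure

/-- For an adjoint pair `F ⊣ G` of exact functors, where the weight structure on the source is
generated by a class `P`, the following are equivalent: `F` is left weight-exact;
`F(P) ⊆ C'_{w'≤0}`; `G` is right weight-exact. -/
theorem left_weight_exact_iff_generators_iff_right_weight_exact
    (w : WeightStructure C) (w' : WeightStructure C')
    (F : C ⥤ C') (G : C' ⥤ C) [F.CommShift ℤ] [G.CommShift ℤ]
    [F.IsTriangulated] [G.IsTriangulated] (adj : F ⊣ G)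
    (P : Set C)
    (hgen : w.GE = {Y : C | ∀ X ∈ P, ∀ i : ℤ, 0 < i → ∀ f : X⟦(-i)⟧ ⟶ Y, f = 0}) :
    ((∀ M ∈ w.LE, F.obj M ∈ w'.LE) ↔ (∀ X ∈ P, F.obj X ∈ w'.LE)) ∧
    ((∀ M ∈ w.LE, F.obj M ∈ w'.LE) ↔ (∀ N ∈ w'.GE, G.obj N ∈ w.GE)) := by
  -- P ⊆ C_{w ≤ 0}
  have hP : ∀ X ∈ P, X ∈ w.LE := by
    intro X hX
    rw [w.mem_LE_iff]
    intro Y hY f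
    rw [hgen] at hY
    have h0 : (shiftFunctor C (-1 : ℤ)).map f ≫ (shiftShiftNeg Y (1 : ℤ)).hom = 0 :=
      hY X hX 1 one_pos _
    have h1 : (shiftFunctor C (-1 : ℤ)).map f = 0 := by
      calc (shiftFunctor C (-1 : ℤ)).map f
          = ((shiftFunctor C (-1 : ℤ)).map f ≫ (shiftShiftNeg Y (1 : ℤ)).hom) ≫
              (shiftShiftNeg Y (1 : ℤ)).inv := by
                rw [Category.assoc, Iso.hom_inv_id, Category.comp_id]
        _ = 0 := by rw [h0, zero_comp]
    apply (shiftFunctor C (-1 : ℤ)).map_injective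
    rw [h1, Functor.map_zero]
  -- (ii) ⇒ (iii)
  have hII_III : (∀ X ∈ P, F.obj X ∈ w'.LE) → (∀ N ∈ w'.GE, G.obj N ∈ w.GE) := by
    intro hII N hN
    rw [hgen]
    intro X hX i hi f
    have h0 : (F.commShiftIso (-i)).inv.app X ≫ (adj.homEquiv _ _).symm f = 0 :=
      w'.hom_zero_of_LE_shift (hII X hX) hN i hi _
    have h1 : (adj.homEquiv _ _).symm f = 0 := by
      calc (adj.homEquiv _ _).symm f
          = (F.commShiftIso (-i)).hom.app X ≫
              ((F.commShiftIso (-i)).inv.app X ≫ (adj.homEquiv _ _).symm f) := by simp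
        _ = 0 := by rw [h0, comp_zero]
    have := (adj.homEquiv _ _).symm.injective (a₁ := f) (a₂ := 0)
    apply this
    rw [h1]
    simp [Adjunction.homEquiv_counit]
  -- (iii) ⇒ (i)
  have hIII_I : (∀ N ∈ w'.GE, G.obj N ∈ w.GE) → (∀ M ∈ w.LE, F.obj M ∈ w'.LE) := by
    intro hIII M hM
    rw [w'.mem_LE_iff]
    intro Y hY f
    have h0 : (adj.homEquiv _ _ f) ≫ (G.commShiftIso (1 : ℤ)).hom.app Y = 0 :=
      w.orth hM (hIII Y hY) _
    have h1 : adj.homEquiv _ _ f = 0 := by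
      calc adj.homEquiv _ _ f
          = ((adj.homEquiv _ _ f) ≫ (G.commShiftIso (1 : ℤ)).hom.app Y) ≫
              (G.commShiftIso (1 : ℤ)).inv.app Y := by simp
        _ = 0 := by rw [h0, zero_comp]
    have := (adj.homEquiv _ _).injective (a₁ := f) (a₂ := 0)
    apply this
    rw [h1]
    simp [Adjunction.homEquiv_unit]
  refine ⟨⟨fun hI X hX => hI X (hP X hX), fun hII => hIII_I (hII_III hII)⟩,
    ⟨fun hI => hII_III (fun X hX => hI X (hP X hX)), hIII_I⟩⟩
end

section
/- Let F : C → C' be a weight-exact fully faithful exact functor between triangulated categories equipped with weight structures w and w'. Then an object M of C belongs to C_{w≤0} if and only if F(M) ∈ C'_{w'≤0}, and M ∈ C_{w≥0} if and only if F(M) ∈ C'_{w'≥0}. -/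
open CategoryTheory CategoryTheory.Limits CategoryTheory.Pretriangulated

universe v u

variable {C : Type u} [Category.{v} C] [Preadditive C] [HasZeroObject C]
    [HasShift C ℤ] [∀ n : ℤ, (shiftFunctor C n).Additive] [Pretriangulated C]

variable {C' : Type*} [Category C'] [Preadditive C'] [HasZeroObject C']
    [HasShift C' ℤ] [∀ n : ℤ, (shiftFunctor C' n).Additive] [Pretriangulated C']

/-- A weight-exact fully faithful exact functor detects the classes of a weight structure:
`M ∈ C_{w≤0}` iff `F(M) ∈ C'_{w'≤0}`, and `M ∈ C_{w≥0}` iff `F(M) ∈ C'_{w'≥0}`. -/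
theorem weight_exact_embedding_detects_weights
    (w : WeightStructure C) (w' : WeightStructure C')
    (F : C ⥤ C') [F.CommShift ℤ] [F.IsTriangulated] [F.Full] [F.Faithful]
    (hLE : ∀ M ∈ w.LE, F.obj M ∈ w'.LE) (hGE : ∀ M ∈ w.GE, F.obj M ∈ w'.GE) :
    ∀ M : C, (M ∈ w.LE ↔ F.obj M ∈ w'.LE) ∧ (M ∈ w.GE ↔ F.obj M ∈ w'.GE) := by
  intro M
  constructor
  · constructor
    · exact hLE M
    · intro hM'
      obtain ⟨X, Y, f, g, h, hdist, hX, hY⟩ := w.decomp M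
      -- show g = 0
      have hg : g = 0 := by
        set e : Y ≅ (Y⟦(-1 : ℤ)⟧)⟦(1 : ℤ)⟧ :=
          ((shiftFunctorCompIsoId C (-1 : ℤ) (1 : ℤ) (by ring)).app Y).symm
        have hφ : F.map (g ≫ e.hom) ≫ (F.commShiftIso (1 : ℤ)).hom.app (Y⟦(-1 : ℤ)⟧) = 0 :=
          w'.orth hM' (hGE _ hY) _
        have : F.map (g ≫ e.hom) = 0 := by
          have h2 := hφ =≫ (F.commShiftIso (1 : ℤ)).inv.app (Y⟦(-1 : ℤ)⟧)
          simpa using h2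
        have hge : g ≫ e.hom = 0 := F.map_injective (by rw [this, F.map_zero])
        calc g = (g ≫ e.hom) ≫ e.inv := by rw [Category.assoc, e.hom_inv_id, Category.comp_id]
        _ = 0 := by rw [hge, zero_comp]
      obtain ⟨r, hr⟩ := Triangle.coyoneda_exact₂ _ hdist (𝟙 M)
        (by simp [hg]; exact Limits.comp_zero)
      exact w.retract_LE hX r f hr.symm
  · constructor
    · exact hGE M
    · intro hM'
      obtain ⟨X, Y, f, g, h, hdist, hX, hY⟩ := w.decomp (M⟦(1 : ℤ)⟧)
      -- show f = 0
      have hf : f = 0 := by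
        have hφ : F.map f ≫ (F.commShiftIso (1 : ℤ)).hom.app M = 0 :=
          w'.orth (hLE _ hX) hM' _
        have : F.map f = 0 := by
          have h2 := hφ =≫ (F.commShiftIso (1 : ℤ)).inv.app M
          simpa using h2
        exact F.map_injective (by rw [this, F.map_zero])
      obtain ⟨r, hr⟩ := Triangle.yoneda_exact₂ _ hdist (𝟙 (M⟦(1 : ℤ)⟧))
        (by simp [hf]; exact Limits.zero_comp)
      obtain ⟨r, hr⟩ : ∃ r : Y ⟶ M⟦(1 : ℤ)⟧, 𝟙 _ = g ≫ r := ⟨r, hr⟩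
      -- hr : 𝟙 (M⟦1⟧) = g ≫ r
      set e : M ≅ (M⟦(1 : ℤ)⟧)⟦(-1 : ℤ)⟧ :=
        ((shiftFunctorCompIsoId C (1 : ℤ) (-1 : ℤ) (by ring)).app M).symm
      refine w.retract_GE hY (e.hom ≫ (shiftFunctor C (-1 : ℤ)).map g)
        ((shiftFunctor C (-1 : ℤ)).map r ≫ e.inv) ?_
      rw [Category.assoc, ← Category.assoc ((shiftFunctor C (-1 : ℤ)).map g),
        ← Functor.map_comp, ← hr, CategoryTheory.Functor.map_id, Category.id_comp, e.hom_inv_id]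
end

section
/- Let C be a triangulated category with weight structure w, let M ∈ C_{w≤0} and N ∈ C_{w≥0}. Choose a weight decomposition X₁[1] → M[1] → Y₁[1] → X₁[2] of M[1] (with X₁ ∈ C_{w≤0}, Y₁[1] ∈ C_{w≥1}), and a weight decomposition X₂ → N → Y → X₂[1] of N (with X₂ ∈ C_{w≤0}, Y ∈ C_{w≥1}). Then Y₁ and X₂ belong to the heart C_{w=0}, and every morphism M → N factors as g ∘ h ∘ f, where f : M → Y₁ comes from the first decomposition, g : X₂ → N from the second, and h : Y₁ → X₂ is some morphism. -/
open CategoryTheory CategoryTheory.Limits CategoryTheory.Pretriangulated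

universe v u

variable {C : Type u} [Category.{v} C] [Preadditive C] [HasZeroObject C]
    [HasShift C ℤ] [∀ n : ℤ, (shiftFunctor C n).Additive] [Pretriangulated C]

/-- Membership in `LE` is invariant under isomorphism. -/
lemma WeightStructure.mem_LE_of_iso_s11 (w : WeightStructure C) {X Y : C} (e : X ≅ Y)
    (hY : Y ∈ w.LE) : X ∈ w.LE :=
  w.retract_LE hY e.hom e.inv e.hom_inv_id

/-- Membership in `GE` is invariant under isomorphism. -/
lemma WeightStructure.mem_GE_of_iso_s11 (w : WeightStructure C) {X Y : C} (e : X ≅ Y)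
    (hY : Y ∈ w.GE) : X ∈ w.GE :=
  w.retract_GE hY e.hom e.inv e.hom_inv_id

/-- Morphisms from `LE` objects to `GE[1]`-type objects vanish (up to the shift iso). -/
lemma WeightStructure.orth' (w : WeightStructure C) {X Y : C} (hX : X ∈ w.LE)
    (hY : Y⟦(-1 : ℤ)⟧ ∈ w.GE) (f : X ⟶ Y) : f = 0 := by
  have e : (Y⟦(-1 : ℤ)⟧)⟦(1 : ℤ)⟧ ≅ Y :=
    (shiftFunctorCompIsoId C (-1 : ℤ) (1 : ℤ) (by ring)).app Y
  have h : f ≫ e.inv = 0 := w.orth hX hY (f ≫ e.inv)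
  rw [← Category.comp_id f, ← e.inv_hom_id, ← Category.assoc, h, zero_comp]

/-- An object right-orthogonal (in degree 1) to all of `LE` lies in `GE`. -/
lemma WeightStructure.mem_GE_of_orth (w : WeightStructure C) {Z : C}
    (h : ∀ A : C, A ∈ w.LE → ∀ f : A ⟶ Z⟦(1 : ℤ)⟧, f = 0) : Z ∈ w.GE := by
  obtain ⟨X₀, Y₀, a, b, c, hT, hX₀, hY₀⟩ := w.decomp (Z⟦(1 : ℤ)⟧)
  have ha : a = 0 := h X₀ hX₀ a
  obtain ⟨r, hr⟩ := Triangle.yoneda_exact₂ _ hT (𝟙 (Z⟦(1 : ℤ)⟧))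
    (by rw [Triangle.mk_mor₁, ha]; exact zero_comp)
  -- `Z⟦1⟧` is a retract of `Y₀`, hence `Z⟦1⟧⟦-1⟧` is a retract of `Y₀⟦-1⟧ ∈ GE`
  have h1 : (Z⟦(1 : ℤ)⟧)⟦(-1 : ℤ)⟧ ∈ w.GE := by
    refine w.retract_GE hY₀ ((shiftFunctor C (-1 : ℤ)).map b)
      ((shiftFunctor C (-1 : ℤ)).map r) ?_
    exact ((shiftFunctor C (-1 : ℤ)).map_comp b r).symm.trans
      ((congrArg (fun t => (shiftFunctor C (-1 : ℤ)).map t) hr.symm).trans (CategoryTheory.Functor.map_id _ _))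
  exact w.mem_GE_of_iso_s11 ((shiftFunctorCompIsoId C (1 : ℤ) (-1 : ℤ) (by ring)).app Z).symm h1

/-- An object left-orthogonal to all of `GE` (in degree 1) lies in `LE`. -/
lemma WeightStructure.mem_LE_of_orth (w : WeightStructure C) {Z : C}
    (h : ∀ B : C, B ∈ w.GE → ∀ f : Z ⟶ B⟦(1 : ℤ)⟧, f = 0) : Z ∈ w.LE := by
  obtain ⟨X₀, Y₀, a, b, c, hT, hX₀, hY₀⟩ := w.decomp Z
  have hb : b = 0 := by
    have e : (Y₀⟦(-1 : ℤ)⟧)⟦(1 : ℤ)⟧ ≅ Y₀ :=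
      (shiftFunctorCompIsoId C (-1 : ℤ) (1 : ℤ) (by ring)).app Y₀
    have h0 : b ≫ e.inv = 0 := h _ hY₀ (b ≫ e.inv)
    rw [← Category.comp_id b, ← e.inv_hom_id, ← Category.assoc, h0, zero_comp]
  obtain ⟨s, hs⟩ := Triangle.coyoneda_exact₂ _ hT (𝟙 Z)
    (by rw [Triangle.mk_mor₂, hb]; exact comp_zero)
  exact w.retract_LE hX₀ s a hs.symm

/-- Given `M ∈ C_{w≤0}`, `N ∈ C_{w≥0}`, a weight decomposition
`X₁[1] → M[1] → Y₁[1] → X₁[2]` of `M[1]` and a weight decomposition `X₂ → N → Y → X₂[1]` of `N`,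
the objects `Y₁` and `X₂` lie in the heart `C_{w=0}`, and every morphism `M ⟶ N` factors as
`g ∘ h ∘ f` where `f : M ⟶ Y₁` is induced by the first decomposition and `g : X₂ ⟶ N` is the
map of the second one. -/
theorem heart_factorization (w : WeightStructure C)
    (M N X₁ Y₁ X₂ Y : C) (hM : M ∈ w.LE) (hN : N ∈ w.GE)
    -- the weight decomposition `X₁[1] → M[1] → Y₁[1] → X₁[2]` of `M[1]`
    (α : X₁⟦(1 : ℤ)⟧ ⟶ M⟦(1 : ℤ)⟧) (β : M⟦(1 : ℤ)⟧ ⟶ Y₁⟦(1 : ℤ)⟧)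
    (γ : Y₁⟦(1 : ℤ)⟧ ⟶ X₁⟦(1 : ℤ)⟧⟦(1 : ℤ)⟧)
    (hT₁ : Triangle.mk α β γ ∈ distTriang C)
    (hX₁ : X₁⟦(1 : ℤ)⟧ ∈ w.LE) (hY₁ : Y₁ ∈ w.GE)
    (f : M ⟶ Y₁) (hf : (shiftFunctor C (1 : ℤ)).map f = β)
    -- the weight decomposition `X₂ → N → Y → X₂[1]` of `N`
    (g : X₂ ⟶ N) (p : N ⟶ Y) (d : Y ⟶ X₂⟦(1 : ℤ)⟧)
    (hT₂ : Triangle.mk g p d ∈ distTriang C)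
    (hX₂ : X₂ ∈ w.LE) (hY : Y⟦(-1 : ℤ)⟧ ∈ w.GE) :
    (Y₁ ∈ w.LE ∩ w.GE) ∧ (X₂ ∈ w.LE ∩ w.GE) ∧
    (∀ φ : M ⟶ N, ∃ h : Y₁ ⟶ X₂, φ = f ≫ h ≫ g) := by
  -- `Y₁ ∈ LE`
  have hY₁LE : Y₁ ∈ w.LE := by
    refine w.mem_LE_of_orth (fun B hB f' => ?_)
    apply (shiftFunctor C (1 : ℤ)).map_injective
    have h1 : β ≫ (shiftFunctor C (1 : ℤ)).map f' = 0 := by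
      rw [← hf, ← Functor.map_comp, w.orth hM hB (f ≫ f'), Functor.map_zero]
    obtain ⟨k, hk⟩ := Triangle.yoneda_exact₃ _ hT₁ ((shiftFunctor C (1 : ℤ)).map f') h1
    obtain ⟨k', rfl⟩ := (shiftFunctor C (1 : ℤ)).map_surjective k
    simp only [Triangle.mk_mor₃, w.orth hX₁ hB k', Functor.map_zero, comp_zero] at hk
    exact hk.trans ((congrArg (γ ≫ ·) ((shiftFunctor C (1 : ℤ)).map_zero _ _)).trans
      (comp_zero.trans ((shiftFunctor C (1 : ℤ)).map_zero _ _).symm))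
  -- `X₂ ∈ GE`
  have hX₂GE : X₂ ∈ w.GE := by
    refine w.mem_GE_of_orth (fun A hA φ => ?_)
    have h1 : φ ≫ (shiftFunctor C (1 : ℤ)).map g = 0 := w.orth hA hN _
    obtain ⟨ψ, hψ⟩ := Triangle.coyoneda_exact₁ _ hT₂ φ h1
    rw [hψ, w.orth' hA hY ψ]; exact zero_comp
  refine ⟨⟨hY₁LE, hY₁⟩, ⟨hX₂, hX₂GE⟩, fun φ => ?_⟩
  -- `φ ≫ p = 0`, so `φ` factors through `g`
  obtain ⟨h₀, hh₀⟩ := Triangle.coyoneda_exact₂ _ hT₂ φ (w.orth' hM hY (φ ≫ p))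
  -- `h₀ : M ⟶ X₂` factors through `f`
  have h1 : α ≫ (shiftFunctor C (1 : ℤ)).map h₀ = 0 := w.orth hX₁ hX₂GE _
  obtain ⟨k, hk⟩ := Triangle.yoneda_exact₂ _ hT₁ ((shiftFunctor C (1 : ℤ)).map h₀) h1
  obtain ⟨h', rfl⟩ := (shiftFunctor C (1 : ℤ)).map_surjective k
  have : h₀ = f ≫ h' := by
    apply (shiftFunctor C (1 : ℤ)).map_injective
    rw [Functor.map_comp, hf]
    exact hk
  exact ⟨h', by rw [hh₀, this, Category.assoc]; rfl⟩
end

section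
/- Let C be a triangulated category with a weight structure w, D ⊆ C a triangulated subcategory on which w restricts to a weight structure (i.e., Obj D ∩ C_{w≤0} and Obj D ∩ C_{w≥0} form a weight structure on D), and suppose the Verdier quotient π : C → C/D exists and carries the induced weight structure whose ≤0 and ≥0 parts are the retract-closures of π(C_{w≤0}) and π(C_{w≥0}). Then for any M ∈ C_{w≤0} and N ∈ C_{w≥0}, the map C(M,N) → (C/D)(π(M), π(N)) is surjective. -/
open CategoryTheory CategoryTheory.Limits CategoryTheory.Pretriangulated

universe v u

variable {C : Type u} [Category.{v} C] [Preadditive C] [HasZeroObject C]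
    [HasShift C ℤ] [∀ n : ℤ, (shiftFunctor C n).Additive] [Pretriangulated C]

variable {C' : Type*} [Category C'] [Preadditive C'] [HasZeroObject C']
    [HasShift C' ℤ] [∀ n : ℤ, (shiftFunctor C' n).Additive] [Pretriangulated C']

/-- The class of morphisms whose cone lies in a class of objects `D`. Inverting it realizes
the Verdier quotient by the triangulated subcategory on `D`. -/
def coneIn (D : Set C) : MorphismProperty C := fun _ _ f =>
  ∃ (Z : C) (g : _ ⟶ Z) (h : Z ⟶ _⟦(1 : ℤ)⟧),
    (Triangle.mk f g h ∈ distTriang C) ∧ Z ∈ D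


set_option linter.unusedSectionVars false

namespace WeightStructure

variable (w : WeightStructure C)

lemma zero₁ {X B : C} (hX : X ∈ w.LE) (hB : B⟦(-1 : ℤ)⟧ ∈ w.GE) (f : X ⟶ B) : f = 0 := by
  have e : (B⟦(-1 : ℤ)⟧)⟦(1 : ℤ)⟧ ≅ B := shiftNegShift B (1 : ℤ)
  have h0 : f ≫ e.inv = 0 := w.orth hX hB _
  calc f = (f ≫ e.inv) ≫ e.hom := by simp
  _ = 0 := by rw [h0, Limits.zero_comp]

lemma zero₂ {A N : C} (hA : A ∈ w.LE) (hN : N ∈ w.GE) (f : A⟦(-1 : ℤ)⟧ ⟶ N) : f = 0 := by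
  apply (shiftFunctor C (1 : ℤ)).map_injective
  have e : (A⟦(-1 : ℤ)⟧)⟦(1 : ℤ)⟧ ≅ A := shiftNegShift A (1 : ℤ)
  have h0 : e.inv ≫ (shiftFunctor C (1 : ℤ)).map f = 0 := w.orth hA hN _
  calc (shiftFunctor C (1 : ℤ)).map f
      = e.hom ≫ (e.inv ≫ (shiftFunctor C (1 : ℤ)).map f) := by simp
  _ = 0 := by rw [h0, Limits.comp_zero]
  _ = (shiftFunctor C (1 : ℤ)).map 0 := by rw [Functor.map_zero]

lemma zero₃ {X B : C} (hX : X ∈ w.LE) (hB : B⟦(-1 : ℤ)⟧ ∈ w.GE)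
    (f : X⟦(-1 : ℤ)⟧ ⟶ B⟦(-1 : ℤ)⟧) : f = 0 := by
  apply (shiftFunctor C (1 : ℤ)).map_injective
  have eX : (X⟦(-1 : ℤ)⟧)⟦(1 : ℤ)⟧ ≅ X := shiftNegShift X (1 : ℤ)
  have eB : (B⟦(-1 : ℤ)⟧)⟦(1 : ℤ)⟧ ≅ B := shiftNegShift B (1 : ℤ)
  have h0 : eX.inv ≫ (shiftFunctor C (1 : ℤ)).map f ≫ eB.hom = 0 := w.zero₁ hX hB _
  calc (shiftFunctor C (1 : ℤ)).map f
      = eX.hom ≫ (eX.inv ≫ (shiftFunctor C (1 : ℤ)).map f ≫ eB.hom) ≫ eB.inv := by simp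
  _ = 0 := by rw [h0]; simp
  _ = (shiftFunctor C (1 : ℤ)).map 0 := by rw [Functor.map_zero]

lemma mem_LE_of_orth_s15 {L : C} (h : ∀ G, G ∈ w.GE → ∀ ψ : L ⟶ G⟦(1 : ℤ)⟧, ψ = 0) :
    L ∈ w.LE := by
  obtain ⟨Xd, Yd, fd, gd, hd, hTd, hXd, hYd⟩ := w.decomp L
  have e : (Yd⟦(-1 : ℤ)⟧)⟦(1 : ℤ)⟧ ≅ Yd := shiftNegShift Yd (1 : ℤ)
  have hgd : gd = 0 := by
    have h0 : gd ≫ e.inv = 0 := h _ hYd _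
    calc gd = (gd ≫ e.inv) ≫ e.hom := by simp
    _ = 0 := by rw [h0, Limits.zero_comp]
  obtain ⟨s, hs⟩ := Triangle.coyoneda_exact₂ _ hTd (𝟙 L)
    (by show 𝟙 L ≫ gd = 0; rw [hgd, Limits.comp_zero])
  exact w.retract_LE hXd s fd hs.symm

lemma mem_LE_ext (T : Triangle C) (hT : T ∈ distTriang C)
    (h1 : T.obj₁ ∈ w.LE) (h3 : T.obj₃ ∈ w.LE) : T.obj₂ ∈ w.LE := by
  apply w.mem_LE_of_orth_s15
  intro G hG ψ
  obtain ⟨g', hg'⟩ := Triangle.yoneda_exact₂ _ hT ψ (w.orth h1 hG _)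
  rw [hg', w.orth h3 hG g', Limits.comp_zero]

end WeightStructure

section CoreLemmas

variable (w : WeightStructure C) (D : Set C)

/-- Right Ore condition for `coneIn D`, single step;
provable in any pretriangulated category. -/
lemma ore_right {U Y X : C} (c : U ⟶ Y) (hc : coneIn D c) (g : X ⟶ Y) :
    ∃ (X₁ : C) (c₁ : X₁ ⟶ X) (_ : coneIn D c₁) (g₁ : X₁ ⟶ U), c₁ ≫ g = g₁ ≫ c := by
  obtain ⟨Z, p, d, hT, hZ⟩ := hc
  obtain ⟨X₁, c₁, d₁, hT₁⟩ := distinguished_cocone_triangle₁ (g ≫ p)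
  obtain ⟨g₁, hg₁, -⟩ := complete_distinguished_triangle_morphism₁ _ _ hT₁ hT g (𝟙 Z)
    (by show (g ≫ p) ≫ 𝟙 Z = g ≫ p; rw [Category.comp_id])
  exact ⟨X₁, c₁, ⟨Z, g ≫ p, d₁, hT₁, hZ⟩, g₁, hg₁⟩

variable (hres : ∀ M ∈ D, ∃ (X Y : C) (f : X ⟶ M) (g : M ⟶ Y) (h : Y ⟶ X⟦(1 : ℤ)⟧),
      (Triangle.mk f g h ∈ distTriang C) ∧ X ∈ D ∩ w.LE ∧ Y ∈ D ∧ Y⟦(-1 : ℤ)⟧ ∈ w.GE)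

include hres in
/-- A morphism of `coneIn D` into an object of `w.LE` may be refined to one
whose source is in `w.LE`. -/
lemma L_replace {X₁ X : C} (c₁ : X₁ ⟶ X) (hc₁ : coneIn D c₁) (hX : X ∈ w.LE) :
    ∃ (L : C) (_ : L ∈ w.LE) (σ : L ⟶ X) (_ : coneIn D σ) (lam : L ⟶ X₁),
      lam ≫ c₁ = σ := by
  obtain ⟨Z, p, d, hT, hZ⟩ := hc₁
  obtain ⟨A, B, α, β, γ, hTZ, ⟨hAD, hALE⟩, hBD, hBGE⟩ := hres Z hZ
  have hpβ : p ≫ β = 0 := w.zero₁ hX hBGE _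
  obtain ⟨g, hg⟩ := Triangle.coyoneda_exact₂ _ hTZ p hpβ
  obtain ⟨L, σ, h', hT₂⟩ := distinguished_cocone_triangle₁ g
  have hσW : coneIn D σ := ⟨A, g, h', hT₂, hAD⟩
  have hLLE : L ∈ w.LE :=
    w.mem_LE_ext _ (inv_rot_of_distTriang _ hT₂) (w.shift_LE hALE) hX
  have hσg : σ ≫ g = 0 := comp_distTriang_mor_zero₁₂ _ hT₂
  have hσp : σ ≫ p = 0 := by rw [hg]; exact (Category.assoc σ g α).symm.trans (by rw [hσg]; exact Limits.zero_comp)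
  obtain ⟨lam, hlam⟩ := Triangle.coyoneda_exact₂ _ hT σ hσp
  exact ⟨L, hLLE, σ, hσW, lam, hlam.symm⟩

end CoreLemmas

section LocLemmas

variable (w : WeightStructure C) (D : Set C)
variable (π : C ⥤ C') [π.CommShift ℤ] [π.IsTriangulated] [π.IsLocalization (coneIn D)]

open ZeroObject in
lemma isZero_pi_obj (hshift : ∀ n : ℤ, ∀ X ∈ D, X⟦n⟧ ∈ D) {K : C} (hK : K ∈ D) :
    IsZero (π.obj K) := by
  have hW : coneIn D (0 : K ⟶ (0 : C)) := by
    refine ⟨K⟦(1 : ℤ)⟧, 0, -(𝟙 K)⟦(1 : ℤ)⟧', ?_, hshift 1 K hK⟩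
    exact rot_of_distTriang _ (contractible_distinguished K)
  have : IsIso (π.map (0 : K ⟶ (0 : C))) := Localization.inverts π (coneIn D) _ hW
  have hz : π.map (0 : K ⟶ (0 : C)) = 0 := π.map_zero _ _
  rw [IsZero.iff_id_eq_zero]
  apply (cancel_mono (π.map (0 : K ⟶ (0 : C)))).mp
  rw [Category.id_comp, Limits.zero_comp, hz]

variable (hres : ∀ M ∈ D, ∃ (X Y : C) (f : X ⟶ M) (g : M ⟶ Y) (h : Y ⟶ X⟦(1 : ℤ)⟧),
      (Triangle.mk f g h ∈ distTriang C) ∧ X ∈ D ∩ w.LE ∧ Y ∈ D ∧ Y⟦(-1 : ℤ)⟧ ∈ w.GE)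
variable (hshift : ∀ n : ℤ, ∀ X ∈ D, X⟦n⟧ ∈ D)

include hres hshift in
/-- Lifting a single right fraction whose denominator has target in `w.LE`
and whose numerator has target in `w.GE`. -/
lemma v1_lift {L X N : C} (σ : L ⟶ X) (hσ : coneIn D σ) (hX : X ∈ w.LE) (hN : N ∈ w.GE)
    (f₂ : L ⟶ N) : ∃ f : X ⟶ N, π.map σ ≫ π.map f = π.map f₂ := by
  obtain ⟨Z, p, d, hT, hZ⟩ := hσ
  obtain ⟨A, B, α, β, γ, hTZ, ⟨hAD, hALE⟩, hBD, hBGE⟩ := hres Z hZ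
  have hT' := inv_rot_of_distTriang _ hT
  set T' := (Triangle.mk σ p d).invRotate with hT'def
  set δ : Z⟦(-1 : ℤ)⟧ ⟶ L := T'.mor₁ with hδ
  set c : Z⟦(-1 : ℤ)⟧ ⟶ N := δ ≫ f₂ with hc
  have hTZ3 := inv_rot_of_distTriang _ (inv_rot_of_distTriang _ (inv_rot_of_distTriang _ hTZ))
  set TZ3 := (Triangle.mk α β γ).invRotate.invRotate.invRotate with hTZ3def
  have h1 : TZ3.mor₁ ≫ c = 0 := w.zero₂ hALE hN _
  obtain ⟨v, hv⟩ := Triangle.yoneda_exact₂ _ hTZ3 c h1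
  have hT'' := inv_rot_of_distTriang _ hT'
  have h2 : T'.invRotate.mor₁ ≫ TZ3.mor₂ = 0 := w.zero₃ hX hBGE _
  obtain ⟨m, hm⟩ := Triangle.yoneda_exact₂ _ hT'' TZ3.mor₂ h2
  set r : L ⟶ N := m ≫ v with hr
  have hδr : δ ≫ (f₂ - r) = 0 := by
    have : δ ≫ r = c := by
      rw [hr, hv, hm]
      exact (Category.assoc _ _ _).symm
    rw [Preadditive.comp_sub, this, ← hc, sub_self]
  obtain ⟨f, hf⟩ := Triangle.yoneda_exact₂ _ hT' (f₂ - r) hδr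
  refine ⟨f, ?_⟩
  have hzero : IsZero (π.obj (B⟦(-1 : ℤ)⟧)) := isZero_pi_obj D π hshift (hshift (-1) B hBD)
  have hr0 : π.map m ≫ π.map v = 0 := by
    rw [show π.map m = 0 from hzero.eq_of_tgt _ _, Limits.zero_comp]
  have := congrArg π.map hf
  have e1 : π.map f₂ - π.map r = π.map σ ≫ π.map f := (π.map_sub.symm.trans this).trans (π.map_comp _ _)
  have e2 : π.map r = 0 := (π.map_comp m v).trans hr0
  rw [e2, sub_zero] at e1
  exact e1.symm

end LocLemmas

section Alt

variable (π : C ⥤ C') (W : MorphismProperty C) [π.IsLocalization W]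

/-- Alternating presentations of morphisms between `π`-images: composites of
images of morphisms of `C` and of formal inverses of morphisms in `W`. -/
inductive AltPres : ∀ {X Y : C}, (π.obj X ⟶ π.obj Y) → Prop
  | base {X Y : C} (g : X ⟶ Y) : AltPres (π.map g)
  | cons {X Y' U Y : C} (g₀ : X ⟶ Y') (c : U ⟶ Y') (hc : W c) {ψ : π.obj U ⟶ π.obj Y}
      (hψ : AltPres ψ) : AltPres (π.map g₀ ≫ (Localization.isoOfHom π W c hc).inv ≫ ψ)

lemma AltPres.prepend :
    ∀ {U Y : C} {ψ : π.obj U ⟶ π.obj Y}, AltPres π W ψ →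
      ∀ {X : C} (h : X ⟶ U), AltPres π W (π.map h ≫ ψ) := by
  intro U Y ψ hψ
  induction hψ with
  | base g =>
    intro X h
    rw [← π.map_comp]
    exact .base _
  | cons g₀ c hc hψ ih =>
    intro X h
    have := AltPres.cons (π := π) (W := W) (h ≫ g₀) c hc hψ
    rw [π.map_comp, Category.assoc] at this
    exact this

lemma AltPres.comp :
    ∀ {X U : C} {φ : π.obj X ⟶ π.obj U}, AltPres π W φ →
      ∀ {Y : C} {ψ : π.obj U ⟶ π.obj Y}, AltPres π W ψ → AltPres π W (φ ≫ ψ) := by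
  intro X U φ hφ
  induction hφ with
  | base g => intro Y ψ hψ; exact AltPres.prepend π W hψ g
  | cons g₀ c hc hφ' ih =>
    intro Y ψ hψ
    have := AltPres.cons (π := π) (W := W) g₀ c hc (ih hψ)
    simpa only [Category.assoc] using this

/-- Every morphism between `π`-images admits an alternating presentation.
This is proved using the explicit construction of the localized category. -/
lemma altPres_total {M N : C} (φ : π.obj M ⟶ π.obj N) : AltPres π W φ := by
  have hinv : W.IsInvertedBy π := Localization.inverts π W
  let Φ : W.Localization ⥤ C' := Localization.Construction.lift π hinv
  haveI : Φ.IsEquivalence := (inferInstance : π.IsLocalization W).isEquivalence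
  have hfac : ∀ {X Y : C} (f : X ⟶ Y), Φ.map (W.Q.map f) = π.map f := by
    intro X Y f
    exact (Functor.congr_hom (Localization.Construction.fac π hinv) f).trans (by erw [eqToHom_refl, eqToHom_refl]; exact (Category.id_comp _).trans (Category.comp_id _))
  let P : MorphismProperty W.Localization := fun A B ψ =>
    AltPres π W (show π.obj A.as.obj ⟶ π.obj B.as.obj from Φ.map ψ)
  haveI : P.IsStableUnderComposition := by
    constructor
    intro A B Cc f g hf hg
    have : Φ.map (f ≫ g) = Φ.map f ≫ Φ.map g := Φ.map_comp f g
    show AltPres π W (show π.obj A.as.obj ⟶ π.obj Cc.as.obj from Φ.map (f ≫ g))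
    rw [this]
    exact AltPres.comp π W hf hg
  have htop : P = ⊤ := by
    apply Localization.Construction.morphismProperty_eq_top P
    · intro X Y f
      show AltPres π W (Φ.map (W.Q.map f))
      rw [hfac]
      exact .base f
    · intro X Y c hc
      show AltPres π W (Φ.map (Localization.Construction.wInv c hc))
      have hhom : Φ.map ((Localization.Construction.wIso c hc).hom) = π.map c := hfac c
      have hinvc : Φ.map ((Localization.Construction.wIso c hc).inv) =
          (Localization.isoOfHom π W c hc).inv := by
        have h1 : π.map c ≫ Φ.map ((Localization.Construction.wIso c hc).inv) = 𝟙 _ := by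
          rw [← hhom]; exact (Φ.map_comp _ _).symm.trans (by rw [Iso.hom_inv_id, Φ.map_id]; rfl)
        exact (Category.id_comp _).symm.trans <|
          (congrArg (fun x => x ≫ Φ.map ((Localization.Construction.wIso c hc).inv))
            (Localization.isoOfHom_inv_hom_id π W c hc).symm).trans <|
          (Category.assoc _ _ _).trans <|
          (congrArg (fun x => (Localization.isoOfHom π W c hc).inv ≫ x) h1).trans
          (Category.comp_id _)
      rw [hinvc]
      have := AltPres.cons (π := π) (W := W) (𝟙 Y) c hc (AltPres.base (π := π) (W := W) (𝟙 X))
      have heq : π.map (𝟙 Y) ≫ (Localization.isoOfHom π W c hc).inv ≫ π.map (𝟙 X) =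
          (Localization.isoOfHom π W c hc).inv := by simp
      rw [heq] at this
      exact this
  have hψ : P (Φ.preimage (show Φ.obj (W.Q.obj M) ⟶ Φ.obj (W.Q.obj N) from φ)) := by
    rw [htop]
    apply MorphismProperty.top_apply
  have hmp := Φ.map_preimage (show Φ.obj (W.Q.obj M) ⟶ Φ.obj (W.Q.obj N) from φ)
  change AltPres π W (Φ.map _) at hψ
  rw [hmp] at hψ
  exact hψ

end Alt

section MainInduction

variable (w : WeightStructure C) (D : Set C)
variable (π : C ⥤ C') [π.CommShift ℤ] [π.IsTriangulated] [π.IsLocalization (coneIn D)]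
variable (hshift : ∀ n : ℤ, ∀ X ∈ D, X⟦n⟧ ∈ D)
variable (hres : ∀ M ∈ D, ∃ (X Y : C) (f : X ⟶ M) (g : M ⟶ Y) (h : Y ⟶ X⟦(1 : ℤ)⟧),
      (Triangle.mk f g h ∈ distTriang C) ∧ X ∈ D ∩ w.LE ∧ Y ∈ D ∧ Y⟦(-1 : ℤ)⟧ ∈ w.GE)

include hshift hres in
lemma main_lift :
    ∀ {U N : C} {ψ : π.obj U ⟶ π.obj N}, AltPres π (coneIn D) ψ → N ∈ w.GE →
      ∀ {X : C}, X ∈ w.LE → ∀ g : X ⟶ U, ∃ f : X ⟶ N, π.map f = π.map g ≫ ψ := by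
  intro U N ψ hψ
  induction hψ with
  | base g' =>
    intro hN X hX g
    exact ⟨g ≫ g', by rw [π.map_comp]⟩
  | @cons X₀ Y' U₀ Y₀ g₀ c hc ψ' hψ' ih =>
    intro hN X hX g
    obtain ⟨X₁, c₁, hc₁, g₁, hsq⟩ := ore_right D c hc (g ≫ g₀)
    obtain ⟨L, hL, σ, hσ, lam, hlam⟩ := L_replace w D hres c₁ hc₁ hX
    obtain ⟨f₂, hf₂⟩ := ih hN hL (lam ≫ g₁)
    obtain ⟨f, hf⟩ := v1_lift w D π hres hshift σ hσ hX hN f₂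
    refine ⟨f, ?_⟩
    haveI : IsIso (π.map σ) := Localization.inverts π (coneIn D) σ hσ
    apply (cancel_epi (π.map σ)).mp
    rw [hf, hf₂]
    have key : π.map σ ≫ π.map g ≫ π.map g₀ = π.map (lam ≫ g₁) ≫ π.map c := by
      rw [← π.map_comp, ← π.map_comp, ← π.map_comp]
      exact congrArg π.map (by rw [← hlam, Category.assoc, hsq, Category.assoc])
    calc π.map (lam ≫ g₁) ≫ ψ'
        = π.map (lam ≫ g₁) ≫
            (π.map c ≫ (Localization.isoOfHom π (coneIn D) c hc).inv) ≫ ψ' := by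
          rw [Localization.isoOfHom_hom_inv_id, Category.id_comp]
      _ = (π.map (lam ≫ g₁) ≫ π.map c) ≫
            (Localization.isoOfHom π (coneIn D) c hc).inv ≫ ψ' := by
          simp only [Category.assoc]
      _ = (π.map σ ≫ π.map g ≫ π.map g₀) ≫
            (Localization.isoOfHom π (coneIn D) c hc).inv ≫ ψ' := by rw [key]
      _ = π.map σ ≫ π.map g ≫ π.map g₀ ≫
            (Localization.isoOfHom π (coneIn D) c hc).inv ≫ ψ' := by
          simp only [Category.assoc]

end MainInduction

/-- If `w` restricts to a weight structure on a triangulated subcategory `D`, and the Verdier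
quotient `π : C → C/D` carries the induced weight structure (whose two classes are the
retract-closures of the images of `C_{w≤0}` and `C_{w≥0}`), then for `M ∈ C_{w≤0}` and
`N ∈ C_{w≥0}` the map `C(M,N) → (C/D)(πM, πN)` is surjective. -/
theorem hom_surjective_onto_verdier_quotient
    (w : WeightStructure C) (D : Set C)
    -- `D` is a (strict full) triangulated subcategory:
    (hshift : ∀ n : ℤ, ∀ X ∈ D, X⟦n⟧ ∈ D)
    (hext : ∀ T : Triangle C, (T ∈ distTriang C) → T.obj₁ ∈ D → T.obj₃ ∈ D → T.obj₂ ∈ D)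
    -- `w` restricts to a weight structure on `D`:
    (hres : ∀ M ∈ D, ∃ (X Y : C) (f : X ⟶ M) (g : M ⟶ Y) (h : Y ⟶ X⟦(1 : ℤ)⟧),
      (Triangle.mk f g h ∈ distTriang C) ∧ X ∈ D ∩ w.LE ∧ Y ∈ D ∧ Y⟦(-1 : ℤ)⟧ ∈ w.GE)
    -- the Verdier quotient functor:
    (π : C ⥤ C') [π.CommShift ℤ] [π.IsTriangulated] [π.IsLocalization (coneIn D)]
    -- the induced weight structure on the quotient:
    (w' : WeightStructure C')
    (hLE' : w'.LE = {A : C' | ∃ M ∈ w.LE, ∃ (i : A ⟶ π.obj M) (r : π.obj M ⟶ A), i ≫ r = 𝟙 A})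
    (hGE' : w'.GE = {A : C' | ∃ M ∈ w.GE, ∃ (i : A ⟶ π.obj M) (r : π.obj M ⟶ A), i ≫ r = 𝟙 A}) :
    ∀ (M N : C), M ∈ w.LE → N ∈ w.GE →
      ∀ φ : π.obj M ⟶ π.obj N, ∃ f : M ⟶ N, π.map f = φ := by
  intro M N hM hN φ
  have halt := altPres_total π (coneIn D) φ
  obtain ⟨f, hf⟩ := main_lift w D π hshift hres halt hN hM (𝟙 M)
  refine ⟨f, ?_⟩
  rw [hf, π.map_id, Category.id_comp]
end
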